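/- Let R be a valuation domain and f: R → S a flat ring epimorphism with S ≠ 0. Then f is injective and there is a prime ideal p of R and a ring isomorphism φ: S → R_p such that φ ∘ f is the canonical localization map R → R_p. -/

import Mathlib

open TensorProduct

universe u

set_option synthInstance.maxHeartbeats 1000000 in
/-- A nonzero flat ring epimorphism out of a valuation domain is injective and is
equivalent to a localization `R → R_p` at a prime ideal `p`. -/
theorem stmt10 (R S : Type u) [CommRing R] [IsDomain R] [ValuationRing R]
    [CommRing S] [Nontrivial S] [Algebra R S]
    (hflat : Module.Flat R S)
    (hepi : Function.Bijective (LinearMap.mul' R S)) :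
    Function.Injective (algebraMap R S) ∧
      ∃ (p : Ideal R) (hp : p.IsPrime),
        ∃ φ : S ≃+* Localization (p.primeCompl (hp := hp)),
          ∀ r : R, φ (algebraMap R S r) =
            algebraMap R (Localization (p.primeCompl (hp := hp))) r := by
  classical
  haveI := hflat
  set K := FractionRing R with hK
  set A := K ⊗[R] S with hA
  set f := algebraMap R S with hf
  have hRK : Function.Injective (algebraMap R K) := IsFractionRing.injective R K
  -- `s ↦ 1 ⊗ₜ s : S → A` is injective, by flatness of `S`.
  have hj : Function.Injective (fun s : S => (1 ⊗ₜ[R] s : A)) := by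
    have h1 : Function.Injective (LinearMap.rTensor S (Algebra.linearMap R K)) :=
      hflat.rTensor_preserves_injective_linearMap _ hRK
    intro s t hst
    have h2 : LinearMap.rTensor S (Algebra.linearMap R K) ((1 : R) ⊗ₜ[R] s)
        = LinearMap.rTensor S (Algebra.linearMap R K) ((1 : R) ⊗ₜ[R] t) := by
      simpa [LinearMap.rTensor_tmul, Algebra.linearMap_apply, map_one] using hst
    have h3 := h1 h2
    have h4 := congrArg (TensorProduct.lid R S) h3
    simpa using h4
  have hA1 : (1 : A) ≠ 0 := by
    intro h
    have h1 : (1 ⊗ₜ[R] (1 : S) : A) = 1 ⊗ₜ[R] (0 : S) := by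
      rw [tmul_zero]
      exact Algebra.TensorProduct.one_def (R := R) (A := K) (B := S) ▸ h
    exact one_ne_zero (hj h1)
  haveI : Nontrivial A := nontrivial_of_ne 1 0 hA1
  haveI : NoZeroSMulDivisors K A := GroupWithZero.toNoZeroSMulDivisors
  -- a K-linear functional `l : A → K` with `l 1 = 1`
  have h1A : LinearIndepOn K id ({(1 : A)} : Set A) :=
    (linearIndepOn_singleton_iff K).mpr hA1
  let b := Module.Basis.extend h1A
  let i : h1A.extend (Set.subset_univ _) :=
    ⟨1, h1A.subset_extend _ (Set.mem_singleton _)⟩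
  let l : A →ₗ[K] K := b.coord i
  have hl1 : l 1 = 1 := by
    have hbi : b i = 1 := Module.Basis.extend_apply_self h1A i
    have h1 := congrArg (b.coord i) hbi
    have h2 : b.coord i (b i) = 1 := by
      rw [Module.Basis.coord_apply, Module.Basis.repr_self, Finsupp.single_eq_same]
    exact h1 ▸ h2
  -- the epimorphism condition: `s ⊗ 1 = 1 ⊗ s`
  have hss : ∀ s : S, (s ⊗ₜ[R] (1 : S) : S ⊗[R] S) = 1 ⊗ₜ[R] s := by
    intro s
    apply hepi.injective
    simp [LinearMap.mul'_apply]
  -- key: every `1 ⊗ₜ s` is in the image of `K`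
  let B : S →ₗ[R] S →ₗ[R] A := LinearMap.mk₂ R
    (fun s₁ s₂ => l (1 ⊗ₜ[R] s₁) • (1 ⊗ₜ[R] s₂ : A))
    (fun m₁ m₂ n => by simp [tmul_add, add_smul])
    (fun c m n => by
      show l (1 ⊗ₜ[R] (c • m)) • (1 ⊗ₜ[R] n : A)
          = c • (l (1 ⊗ₜ[R] m) • (1 ⊗ₜ[R] n : A))
      rw [tmul_smul, LinearMap.map_smul_of_tower, smul_assoc])
    (fun m n₁ n₂ => by simp [tmul_add, smul_add])
    (fun c m n => by
      show l (1 ⊗ₜ[R] m) • (1 ⊗ₜ[R] (c • n) : A)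
          = c • (l (1 ⊗ₜ[R] m) • (1 ⊗ₜ[R] n : A))
      rw [tmul_smul, smul_comm])
  let e := algebraMap K A
  have he : Function.Injective e := RingHom.injective e
  have key : ∀ s : S, e (l (1 ⊗ₜ[R] s)) = (1 ⊗ₜ[R] s : A) := by
    intro s
    have h := congrArg (TensorProduct.lift B) (hss s)
    simp only [TensorProduct.lift.tmul, LinearMap.mk₂_apply, B] at h
    rw [← Algebra.TensorProduct.one_def, hl1, one_smul] at h
    exact (Algebra.algebraMap_eq_smul_one _).trans h
  -- compatibility: `e (algebraMap R K r) = 1 ⊗ₜ f r`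
  have htens : ∀ r : R, e (algebraMap R K r) = (1 ⊗ₜ[R] (f r) : A) := by
    intro r
    calc e (algebraMap R K r) = (algebraMap R K r) ⊗ₜ[R] (1 : S) :=
          Algebra.TensorProduct.algebraMap_apply (algebraMap R K r)
      _ = (r • (1 : K)) ⊗ₜ[R] (1 : S) := by rw [Algebra.algebraMap_eq_smul_one]
      _ = (1 : K) ⊗ₜ[R] (r • (1 : S)) := by rw [smul_tmul]
      _ = (1 : K) ⊗ₜ[R] (f r) := by rw [← Algebra.algebraMap_eq_smul_one]
  -- injectivity of f
  have hinj : Function.Injective f := by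
    intro x y hxy
    apply hRK
    apply he
    rw [htens, htens, hxy]
  -- the prime ideal p
  let p : Ideal R :=
    { carrier := {r | ¬ IsUnit (f r)}
      add_mem' := by
        rintro a c ha hc hac
        obtain ⟨d, hd | hd⟩ := ValuationRing.cond a c
        · apply ha
          have h1 : a + c = a * (1 + d) := by rw [mul_add, mul_one, hd]
          rw [h1, map_mul] at hac
          exact isUnit_of_mul_isUnit_left hac
        · apply hc
          have h1 : a + c = c * (1 + d) := by rw [mul_add, mul_one, hd, add_comm]
          rw [h1, map_mul] at hac
          exact isUnit_of_mul_isUnit_left hac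
      zero_mem' := by
        show ¬ IsUnit (f 0)
        rw [map_zero]
        exact not_isUnit_zero
      smul_mem' := by
        intro c x hx h
        rw [smul_eq_mul, map_mul] at h
        exact hx (isUnit_of_mul_isUnit_right h)
    }
  have hmem : ∀ r : R, r ∈ p ↔ ¬ IsUnit (f r) := fun r => Iff.rfl
  have hp : p.IsPrime := by
    refine ⟨fun h => ?_, fun {a c} hac => ?_⟩
    · have h1 : (1 : R) ∈ p := h ▸ Submodule.mem_top
      rw [hmem, map_one] at h1
      exact h1 isUnit_one
    · by_contra h
      push_neg at h
      obtain ⟨h1, h2⟩ := h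
      rw [hmem, not_not] at h1 h2
      rw [hmem, map_mul] at hac
      exact hac (h1.mul h2)
  haveI hp' := hp
  have hcompl : ∀ r : R, IsUnit (f r) → r ∈ p.primeCompl := by
    intro r hr
    show r ∉ p
    rw [hmem, not_not]
    exact hr
  haveI hloc : IsLocalization p.primeCompl S := by
    refine ⟨?_, ?_, ?_⟩
    · rintro ⟨m, hm⟩
      have : ¬ ¬ IsUnit (f m) := hm
      exact not_not.mp this
    · intro z
      obtain ⟨⟨a, c⟩, hx⟩ := IsLocalization.surj (nonZeroDivisors R) (l (1 ⊗ₜ[R] z))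
      obtain ⟨d, hd | hd⟩ := ValuationRing.cond a (c : R)
      · -- a * d = c ; then l(1⊗z) * alg d = 1, so z * f d = 1
        have ha0 : (a : R) ≠ 0 := by
          intro h0
          apply nonZeroDivisors.coe_ne_zero c
          rw [← hd, h0, zero_mul]
        have halg : algebraMap R K a ≠ 0 := fun h0 => ha0 (hRK (by rwa [map_zero]))
        have h1 : algebraMap R K a * (l (1 ⊗ₜ[R] z) * algebraMap R K d)
            = algebraMap R K a * 1 := by
          rw [← hd, map_mul] at hx
          rw [mul_one]
          linear_combination hx
        have h2 : l (1 ⊗ₜ[R] z) * algebraMap R K d = 1 := mul_left_cancel₀ halg h1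
        have h3 : (1 ⊗ₜ[R] (z * f d) : A) = 1 ⊗ₜ[R] (f 1) := by
          rw [map_one, ← Algebra.TensorProduct.one_def, ← map_one e, ← h2, map_mul,
            key, htens, Algebra.TensorProduct.tmul_mul_tmul, one_mul, h2]
        have h4 : z * f d = f 1 := hj h3
        have hdu : IsUnit (f d) := by
          refine IsUnit.of_mul_eq_one (a := f d) z ?_
          rw [mul_comm, h4, map_one]
        exact ⟨⟨1, ⟨d, hcompl d hdu⟩⟩, h4⟩
      · -- c * d = a ; then l(1⊗z) = alg d, so z = f d
        have hc0 : algebraMap R K c ≠ 0 := fun h0 =>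
          nonZeroDivisors.coe_ne_zero c (hRK (by rwa [map_zero]))
        have h1 : algebraMap R K c * l (1 ⊗ₜ[R] z)
            = algebraMap R K c * algebraMap R K d := by
          rw [← hd, map_mul] at hx
          linear_combination hx
        have h2 : l (1 ⊗ₜ[R] z) = algebraMap R K d := mul_left_cancel₀ hc0 h1
        have h3 : (1 ⊗ₜ[R] z : A) = 1 ⊗ₜ[R] (f d) := by
          rw [← key, h2, htens]
        have h4 : z = f d := hj h3
        refine ⟨⟨d, 1⟩, ?_⟩
        rw [OneMemClass.coe_one, map_one, mul_one, ← h4]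
    · intro x y hxy
      exact ⟨1, by rw [hinj hxy]⟩
  refine ⟨hinj, p, hp, ?_⟩
  let φ := IsLocalization.algEquiv p.primeCompl S (Localization p.primeCompl)
  exact ⟨φ.toRingEquiv, fun r => φ.commutes r⟩
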